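/- Let f_1 = \sum_{k=1}^\infty (p_k - 1)/(p_1 p_2 \cdots p_{k-1}) and define recursively f_{n+1} = \lfloor f_n \rfloor (f_n - \lfloor f_n \rfloor + 1) for n \ge 1. Then \lfloor f_n \rfloor = p_n for every n \ge 1, i.e., the floor of f_n is the n-th prime. -/
import Mathlib


open scoped BigOperators

/-- `p k` is the `(k+1)`-st prime, i.e. the paper's `p_{k+1}` (so `p 0 = 2`). -/
noncomputable def p (k : ℕ) : ℕ := Nat.nth Nat.Prime k

/-- The `k`-th summand `(p_{k+1} - 1) / (p_1 ⋯ p_k)` of the series (0-indexed). -/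
noncomputable def primeTerm (k : ℕ) : ℝ :=
  ((p k : ℝ) - 1) / ∏ i ∈ Finset.range k, (p i : ℝ)


lemma p_prime (k : ℕ) : (p k).Prime := Nat.prime_nth_prime k
lemma p_two_le (k : ℕ) : 2 ≤ p k := (p_prime k).two_le
lemma p_lt_p {j k : ℕ} (h : j < k) : p j < p k :=
  (Nat.nth_lt_nth Nat.infinite_setOf_prime).2 h

lemma p_le_of_prime {j q : ℕ} (hq : q.Prime) (h : p j < q) : p (j + 1) ≤ q := by
  have hnc : Nat.nth Nat.Prime (Nat.count Nat.Prime q) = q := Nat.nth_count hq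
  have hj : j < Nat.count Nat.Prime q := by
    by_contra h'
    push_neg at h'
    have h2 := (Nat.nth_le_nth (p := Nat.Prime) Nat.infinite_setOf_prime).2 h'
    rw [hnc] at h2
    exact absurd h (not_lt.2 h2)
  have h3 := (Nat.nth_le_nth (p := Nat.Prime) Nat.infinite_setOf_prime).2 hj
  rw [hnc] at h3
  exact h3

lemma p_succ_lt (j : ℕ) : p (j + 1) < 2 * p j := by
  obtain ⟨q, hq, h1, h2⟩ :=
    Nat.exists_prime_lt_and_le_two_mul (p j) (by have := p_two_le j; omega)
  have hle := p_le_of_prime hq h1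
  rcases lt_or_eq_of_le h2 with h | h
  · omega
  · rcases hq.eq_one_or_self_of_dvd 2 ⟨p j, h⟩ with h' | h' <;>
      [omega; (have := p_two_le j; omega)]

lemma chain_lemma (n : ℕ) : ∃ i : ℕ, p (n + i + 1) + 1 < 2 * p (n + i) := by
  by_contra hc
  push_neg at hc
  have heq : ∀ i, p (n + i + 1) + 1 = 2 * p (n + i) := fun i => by
    have h1 := p_succ_lt (n + i); have h2 := hc i; omega
  set a := p n - 1 with ha
  have ha1 : 1 ≤ a := by have := p_two_le n; omega
  have hpow : ∀ i, p (n + i) = 2 ^ i * a + 1 := by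
    intro i; induction i with
    | zero => simpa using by have := p_two_le n; omega
    | succ i ih =>
      have h1 := heq i
      rw [ih] at h1
      have hp : (2:ℕ) ^ (i + 1) = 2 ^ i * 2 := pow_succ 2 i
      have h2 : 2 ^ (i + 1) * a = 2 * (2 ^ i * a) := by rw [hp]; ring
      have : n + (i + 1) = n + i + 1 := by omega
      rw [this]
      omega
  set q := p (n + 1) with hq
  have hqprime : q.Prime := p_prime (n + 1)
  haveI : Fact q.Prime := ⟨hqprime⟩
  have hqa : q = 2 * a + 1 := by have := hpow 1; simpa using this
  have hdvd : q ∣ p (n + q) := by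
    rw [← ZMod.natCast_eq_zero_iff]
    rw [hpow q]
    push_cast
    rw [ZMod.pow_card (2 : ZMod q)]
    have : ((2:ZMod q) * a + 1) = ((2 * a + 1 : ℕ) : ZMod q) := by push_cast; ring
    rw [this, ← hqa, ZMod.natCast_self]
  have hlt : q < p (n + q) := by
    have : n + 1 < n + q := by have := hqprime.two_le; omega
    exact p_lt_p this
  have := (Nat.prime_dvd_prime_iff_eq hqprime (p_prime (n + q))).1 hdvd
  omega

noncomputable def Pr (n k : ℕ) : ℝ := ∏ i ∈ Finset.range k, (p (n + i) : ℝ)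
noncomputable def trm (n k : ℕ) : ℝ := ((p (n + k) : ℝ) - 1) / Pr n k
noncomputable def uu (n k : ℕ) : ℝ := ((p (n + k) : ℝ) - 1) / Pr n (k + 1)
noncomputable def T (n : ℕ) : ℝ := ∑' k, trm n k

lemma p_cast_pos (k : ℕ) : (0:ℝ) < (p k : ℝ) := by
  have := p_two_le k; exact_mod_cast by omega

lemma Pr_pos (n k : ℕ) : 0 < Pr n k :=
  Finset.prod_pos fun i _ => p_cast_pos (n + i)

lemma two_pow_le_Pr (n k : ℕ) : (2:ℝ) ^ k ≤ Pr n k := by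
  have : (2:ℝ) ^ k = ∏ _i ∈ Finset.range k, (2:ℝ) := by
    rw [Finset.prod_const, Finset.card_range]
  rw [this]
  exact Finset.prod_le_prod (fun i _ => by norm_num)
    (fun i _ => by exact_mod_cast p_two_le (n + i))

lemma Pr_succ (n k : ℕ) : Pr n (k + 1) = Pr n k * (p (n + k) : ℝ) :=
  Finset.prod_range_succ _ _

lemma Pr_succ' (n k : ℕ) : Pr n (k + 1) = (p n : ℝ) * Pr (n + 1) k := by
  rw [Pr, Finset.prod_range_succ', mul_comm, add_zero]
  congr 1
  exact Finset.prod_congr rfl fun i _ => by rw [show n + (i + 1) = n + 1 + i by omega]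

lemma one_le_sub (k : ℕ) : (1:ℝ) ≤ (p k : ℝ) - 1 := by
  have := p_two_le k
  have : (2:ℝ) ≤ (p k : ℝ) := by exact_mod_cast this
  linarith

lemma trm_nonneg (n k : ℕ) : 0 ≤ trm n k :=
  div_nonneg (by linarith [one_le_sub (n + k)]) (Pr_pos n k).le

lemma uu_nonneg (n k : ℕ) : 0 ≤ uu n k :=
  div_nonneg (by linarith [one_le_sub (n + k)]) (Pr_pos n (k + 1)).le

lemma uu_eq (n k : ℕ) : uu n k = 1 / Pr n k - 1 / Pr n (k + 1) := by
  rw [uu, Pr_succ]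
  have h1 := (Pr_pos n k).ne'
  have h2 := (p_cast_pos (n + k)).ne'
  field_simp

lemma sum_uu (n m : ℕ) : ∑ k ∈ Finset.range m, uu n k = 1 - 1 / Pr n m := by
  induction m with
  | zero => simp [Pr]
  | succ m ih => rw [Finset.sum_range_succ, ih, uu_eq]; ring

lemma hasSum_uu (n : ℕ) : HasSum (uu n) 1 := by
  rw [hasSum_iff_tendsto_nat_of_nonneg (uu_nonneg n) 1]
  have h : Filter.Tendsto (fun m => 1 / Pr n m) Filter.atTop (nhds 0) := by
    apply squeeze_zero (fun m => by have := Pr_pos n m; positivity) (g := fun m => (1/2:ℝ) ^ m)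
    · intro m
      rw [div_pow, one_pow]
      exact one_div_le_one_div_of_le (by positivity) (two_pow_le_Pr n m)
    · exact tendsto_pow_atTop_nhds_zero_of_lt_one (by norm_num) (by norm_num)
  have := h.const_sub 1
  simp only [sub_zero] at this
  exact Filter.Tendsto.congr (fun m => (sum_uu n m).symm) this

lemma num_le (n k : ℕ) : ((p (n + (k + 1)) : ℝ) - 1) ≤ 2 * ((p (n + k) : ℝ) - 1) := by
  have h : p (n + k + 1) + 1 ≤ 2 * p (n + k) := p_succ_lt (n + k)
  have h2 : (p (n + k + 1) : ℝ) + 1 ≤ 2 * (p (n + k) : ℝ) := by exact_mod_cast h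
  rw [show n + (k + 1) = n + k + 1 by omega]
  linarith

lemma trm_succ_le (n k : ℕ) : trm n (k + 1) ≤ 2 * uu n k := by
  rw [trm, uu, ← mul_div_assoc]
  exact (div_le_div_iff_of_pos_right (Pr_pos n (k + 1))).2 (num_le n k)

lemma summable_shift (n : ℕ) : Summable fun k => trm n (k + 1) :=
  Summable.of_nonneg_of_le (fun k => trm_nonneg n (k + 1)) (trm_succ_le n)
    ((hasSum_uu n).summable.mul_left 2)

lemma summable_trm (n : ℕ) : Summable (trm n) :=
  (summable_nat_add_iff 1).1 (summable_shift n)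

lemma trm_zero (n : ℕ) : trm n 0 = (p n : ℝ) - 1 := by
  rw [trm]; simp [Pr]

lemma trm_shift (n k : ℕ) : trm n (k + 1) = (1 / (p n : ℝ)) * trm (n + 1) k := by
  rw [trm, trm, Pr_succ', show n + (k + 1) = n + 1 + k by omega]
  have h1 := (p_cast_pos n).ne'
  have h2 := (Pr_pos (n + 1) k).ne'
  field_simp

lemma tail_eq (n : ℕ) : ∑' k, trm n (k + 1) = T (n + 1) / (p n : ℝ) := by
  calc ∑' k, trm n (k + 1) = ∑' k, (1 / (p n : ℝ)) * trm (n + 1) k := by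
        exact tsum_congr fun k => trm_shift n k
    _ = (1 / (p n : ℝ)) * T (n + 1) := tsum_mul_left
    _ = T (n + 1) / (p n : ℝ) := by rw [one_div_mul_eq_div]

lemma T_rec (n : ℕ) : T n = ((p n : ℝ) - 1) + T (n + 1) / (p n : ℝ) := by
  rw [T, Summable.tsum_eq_zero_add (summable_trm n), trm_zero, tail_eq]

lemma T_lower (m : ℕ) : (p m : ℝ) - 1 ≤ T m := by
  rw [← trm_zero m]
  exact Summable.le_tsum (summable_trm m) 0 fun j _ => trm_nonneg m j

lemma tail_lt_two (n : ℕ) : ∑' k, trm n (k + 1) < 2 := by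
  obtain ⟨i, hi⟩ := chain_lemma n
  have hstrict : trm n (i + 1) < 2 * uu n i := by
    rw [trm, uu, ← mul_div_assoc]
    refine (div_lt_div_iff_of_pos_right (Pr_pos n (i + 1))).2 ?_
    have : (p (n + i + 1) : ℝ) + 1 < 2 * (p (n + i) : ℝ) := by exact_mod_cast hi
    rw [show n + (i + 1) = n + i + 1 by omega]
    linarith
  calc ∑' k, trm n (k + 1) < ∑' k, 2 * uu n k :=
        Summable.tsum_lt_tsum_of_nonneg (fun k => trm_nonneg n (k + 1)) (trm_succ_le n) hstrict
          ((hasSum_uu n).summable.mul_left 2)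
    _ = 2 * 1 := by rw [tsum_mul_left, (hasSum_uu n).tsum_eq]
    _ = 2 := by norm_num

lemma T_upper (m : ℕ) : T m < (p m : ℝ) + 1 := by
  have := tail_lt_two m
  rw [T, Summable.tsum_eq_zero_add (summable_trm m), trm_zero]
  linarith

lemma ratio_bounds (n : ℕ) : 1 ≤ T (n + 1) / (p n : ℝ) ∧ T (n + 1) / (p n : ℝ) < 2 := by
  have hp := p_cast_pos n
  constructor
  · rw [le_div_iff₀ hp, one_mul]
    have h1 : p n + 1 ≤ p (n + 1) := p_lt_p (Nat.lt_succ_self n)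
    have h2 : (p n : ℝ) + 1 ≤ (p (n + 1) : ℝ) := by exact_mod_cast h1
    linarith [T_lower (n + 1)]
  · rw [div_lt_iff₀ hp]
    have h1 : p (n + 1) + 1 ≤ 2 * p n := p_succ_lt n
    have h2 : (p (n + 1) : ℝ) + 1 ≤ 2 * (p n : ℝ) := by exact_mod_cast h1
    linarith [T_upper (n + 1)]

lemma floor_T (n : ℕ) : ⌊T n⌋ = (p n : ℤ) := by
  obtain ⟨h1, h2⟩ := ratio_bounds n
  rw [Int.floor_eq_iff, T_rec n]
  push_cast
  constructor <;> linarith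

/-- The paper's sequence `f_{n}` with `f_1 = ∑ (p_k - 1)/(p_1 ⋯ p_{k-1})`, here
0-indexed: `f 0 = f_1` and `f (n+1) = ⌊f n⌋ (f n - ⌊f n⌋ + 1)`.  Its floor is
always a prime: `⌊f n⌋` is the `(n+1)`-st prime. -/
theorem statement1 (f : ℕ → ℝ)
    (h1 : f 0 = ∑' k, primeTerm k)
    (hrec : ∀ n, f (n + 1) = (⌊f n⌋ : ℝ) * (f n - ⌊f n⌋ + 1)) :
    ∀ n, ⌊f n⌋ = (p n : ℤ) := by
  have key : ∀ n, f n = T n := by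
    intro n
    induction n with
    | zero =>
      rw [h1, T]
      exact tsum_congr fun k => by simp [primeTerm, trm, Pr]
    | succ n ih =>
      rw [hrec n, ih, floor_T n]
      push_cast
      have hTn : T n - (p n : ℝ) + 1 = T (n + 1) / (p n : ℝ) := by
        rw [T_rec n]; ring
      rw [hTn, mul_comm, div_mul_cancel₀ _ (p_cast_pos n).ne']
  intro n
  rw [key n, floor_T n]
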